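/- For a game option (Y,X,X') and fixed σ ∈ T, a pair (σ,y) with y ∈ Φ hedges (Y,X,X') for the seller if and only if y_τ − H_{στ} ∈ K_τ for every stopping time τ ∈ T with τ ≤ σ; consequently the ask price decomposes as π^a_i(Y,X,X') = min over σ ∈ T of p^a_i(σ), where p^a_i(σ) = inf{ z ∈ ℝ : ∃ y ∈ Φ with y_0 = z e^i and y_τ − H_{στ} ∈ K_τ for all τ ∈ T with τ ≤ σ }. -/

import Mathlib

open Pointwise
open scoped MeasureTheory

noncomputable section

/-- Euclidean dot product on `Fin d → ℝ`. -/
def dotp {d : ℕ} (x y : Fin d → ℝ) : ℝ := ∑ i, x i * y i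

/-- The `i`-th canonical basis vector of `ℝ^d`. -/
def eVec {d : ℕ} (i : Fin d) : Fin d → ℝ := Pi.single i 1

/-- The solvency cone determined by a matrix of exchange rates: the convex cone
generated by the canonical basis vectors `e^i` and the vectors `π^{ij} e^i − e^j`. -/
def solvencyCone {d : ℕ} (π : Fin d → Fin d → ℝ) : Set (Fin d → ℝ) :=
  {x | ∃ a : Fin d → ℝ, ∃ b : Fin d → Fin d → ℝ,
    (∀ i, 0 ≤ a i) ∧ (∀ i j, 0 ≤ b i j) ∧
    x = (∑ i, a i • eVec i) + ∑ i, ∑ j, b i j • (π i j • eVec i - eVec j)}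

/-- Positive polar of a set in `ℝ^d`. -/
def posPolar {d : ℕ} (A : Set (Fin d → ℝ)) : Set (Fin d → ℝ) :=
  {x | ∀ y ∈ A, 0 ≤ dotp x y}

/-- A (closed) polyhedron: a finite intersection of closed half-spaces. -/
def IsPolyhedron {d : ℕ} (A : Set (Fin d → ℝ)) : Prop :=
  ∃ (n : ℕ) (a : Fin n → Fin d → ℝ) (b : Fin n → ℝ),
    A = {x | ∀ k, dotp (a k) x ≤ b k}

/-- A finite union of nonempty (closed) polyhedra. -/
def FinUnionPoly {d : ℕ} (A : Set (Fin d → ℝ)) : Prop :=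
  ∃ (n : ℕ) (Q : Fin n → Set (Fin d → ℝ)),
    (∀ k, IsPolyhedron (Q k) ∧ (Q k).Nonempty) ∧ A = ⋃ k, Q k

/-- The atom of the σ-algebra `m` containing `ω`. -/
def atomOf {Ω : Type*} (m : MeasurableSpace Ω) (ω : Ω) : Set Ω :=
  {ω' | ∀ A : Set Ω, MeasurableSet[m] A → ω ∈ A → ω' ∈ A}

variable {Ω : Type*}

/-- A stopping time with values in `0,…,T`. -/
def IsStoppingTime (F : ℕ → MeasurableSpace Ω) (T : ℕ) (τ : Ω → ℕ) : Prop :=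
  (∀ ω, τ ω ≤ T) ∧ ∀ t, MeasurableSet[F t] {ω | τ ω ≤ t}

/-- A randomised stopping time: an adapted nonnegative process with `Σ_{t=0}^T χ_t = 1`. -/
def IsRandomisedST [Fintype Ω] (F : ℕ → MeasurableSpace Ω) (T : ℕ) (χ : ℕ → Ω → ℝ) : Prop :=
  (∀ t, t ≤ T → Measurable[F t] (χ t)) ∧ (∀ t ω, t ≤ T → 0 ≤ χ t ω) ∧
  ∀ ω, ∑ t ∈ Finset.range (T + 1), χ t ω = 1

/-- `χ*_t = Σ_{s=t}^T χ_s`. -/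
def chiStar (T : ℕ) (χ : ℕ → Ω → ℝ) (t : ℕ) (ω : Ω) : ℝ := ∑ s ∈ Finset.Icc t T, χ s ω

/-- The truncated randomised stopping time `χ ∧ σ`,
`(χ∧σ)_t = χ_t 1_{t<σ} + χ*_t 1_{t=σ}`. -/
def trunc (T : ℕ) (χ : ℕ → Ω → ℝ) (σ : Ω → ℕ) (t : ℕ) (ω : Ω) : ℝ :=
  if t < σ ω then χ t ω else if t = σ ω then chiStar T χ t ω else 0

/-- The value `A_χ = Σ_{t=0}^T χ_t A_t` of an (adapted real) process at a randomised
stopping time. -/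
def valAt (T : ℕ) (χ : ℕ → Ω → ℝ) (A : ℕ → Ω → ℝ) (ω : Ω) : ℝ :=
  ∑ t ∈ Finset.range (T + 1), χ t ω * A t ω

/-- Expectation with respect to a probability `p` on a finite space. -/
def expect [Fintype Ω] (p : Ω → ℝ) (f : Ω → ℝ) : ℝ := ∑ ω, p ω * f ω

/-- The game option payoff
`Q_{st} = Y_t 1_{s>t} + X_s 1_{s<t} + X'_s 1_{s=t}`. -/
def payoffQ {d : ℕ} (Y X X' : ℕ → Ω → Fin d → ℝ) (s t : ℕ) (ω : Ω) : Fin d → ℝ :=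
  if t < s then Y t ω else if s < t then X s ω else X' s ω

/-- The auxiliary payoff
`H_{st} = Y_t 1_{s>t} + X_s 1_{s=t<T} + X'_s 1_{s=t=T}`. -/
def payoffH {d : ℕ} (T : ℕ) (Y X X' : ℕ → Ω → Fin d → ℝ) (s t : ℕ) (ω : Ω) : Fin d → ℝ :=
  if t < s then Y t ω
  else if s = t ∧ s < T then X s ω
  else if s = t ∧ s = T then X' s ω
  else 0

/-- `(Q_{σ·}·S_{σ∧·})_χ = Σ_{t=0}^{σ−1} χ_t Y_t·S_t + χ*_{σ+1} X_σ·S_σ + χ_σ X'_σ·S_σ`. -/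
def sellerValue {d : ℕ} (T : ℕ) (Y X X' S : ℕ → Ω → Fin d → ℝ) (σ : Ω → ℕ)
    (χ : ℕ → Ω → ℝ) (ω : Ω) : ℝ :=
  (∑ t ∈ Finset.range (σ ω), χ t ω * dotp (Y t ω) (S t ω))
    + chiStar T χ (σ ω + 1) ω * dotp (X (σ ω) ω) (S (σ ω) ω)
    + χ (σ ω) ω * dotp (X' (σ ω) ω) (S (σ ω) ω)

/-- `(Q_{·τ}·S_{·∧τ})_χ = Σ_{s=0}^{τ−1} χ_s X_s·S_s + χ*_{τ+1} Y_τ·S_τ + χ_τ X'_τ·S_τ`. -/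
def buyerValue {d : ℕ} (T : ℕ) (Y X X' S : ℕ → Ω → Fin d → ℝ) (τ : Ω → ℕ)
    (χ : ℕ → Ω → ℝ) (ω : Ω) : ℝ :=
  (∑ s ∈ Finset.range (τ ω), χ s ω * dotp (X s ω) (S s ω))
    + chiStar T χ (τ ω + 1) ω * dotp (Y (τ ω) ω) (S (τ ω) ω)
    + χ (τ ω) ω * dotp (X' (τ ω) ω) (S (τ ω) ω)

/-- The randomised stopping time `χ'_t = χ_t 1_{t<σ} + χ*_σ 1_{t=T}`. -/
def chiPrime (T : ℕ) (χ : ℕ → Ω → ℝ) (σ : Ω → ℕ) (t : ℕ) (ω : Ω) : ℝ :=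
  if t < σ ω then χ t ω else if t = T then chiStar T χ (σ ω) ω else 0

/-- The Kabanov discrete-time currency model with proportional transaction costs on a
finite probability space. -/
structure Market (Ω : Type*) [Fintype Ω] (d T : ℕ) where
  F : ℕ → MeasurableSpace Ω
  F_mono : ∀ s t : ℕ, s ≤ t → F s ≤ F t
  F_zero : F 0 = ⊥
  F_top : F T = ⊤
  P : Ω → ℝ
  P_pos : ∀ ω, 0 < P ω
  P_sum : ∑ ω, P ω = 1
  pi : ℕ → Fin d → Fin d → Ω → ℝ
  pi_pos : ∀ t, t ≤ T → ∀ i j ω, 0 < pi t i j ω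
  pi_one : ∀ t, t ≤ T → ∀ i ω, pi t i i ω = 1
  pi_meas : ∀ t, t ≤ T → ∀ i j, Measurable[F t] (pi t i j)

variable [Fintype Ω] {d T : ℕ}

/-- The solvency cone `K_t(ω)`. -/
def Market.cone (M : Market Ω d T) (t : ℕ) (ω : Ω) : Set (Fin d → ℝ) :=
  solvencyCone (fun i j => M.pi t i j ω)

/-- Self-financing (predictable) trading strategy. -/
def Market.SelfFinancing (M : Market Ω d T) (y : ℕ → Ω → Fin d → ℝ) : Prop :=
  Measurable[M.F 0] (y 0) ∧ (∀ t, t < T → Measurable[M.F t] (y (t + 1))) ∧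
  ∀ t, t < T → ∀ ω, y t ω - y (t + 1) ω ∈ M.cone t ω

/-- Absence of arbitrage. -/
def Market.NoArbitrage (M : Market Ω d T) : Prop :=
  ¬∃ y : ℕ → Ω → Fin d → ℝ, M.SelfFinancing y ∧ (∀ ω, y 0 ω = 0) ∧
    ∃ x : Ω → Fin d → ℝ, (∀ ω i, 0 ≤ x ω i) ∧ x ≠ 0 ∧ ∀ ω, y T ω - x ω ∈ M.cone T ω

/-- An equivalent martingale pair `(ℙ,S)` with `S_t ∈ K*_t \ {0}`. -/
def MartingalePair (M : Market Ω d T) (p : Ω → ℝ) (S : ℕ → Ω → Fin d → ℝ) : Prop :=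
  (∀ ω, 0 < p ω) ∧ (∑ ω, p ω = 1) ∧
  (∀ t, t ≤ T → Measurable[M.F t] (S t)) ∧
  (∀ t, t < T → ∀ A : Set Ω, MeasurableSet[M.F t] A →
    (∑ ω, A.indicator (fun ω' => p ω' • S (t + 1) ω') ω)
      = ∑ ω, A.indicator (fun ω' => p ω' • S t ω') ω) ∧
  ∀ t ω, t ≤ T → S t ω ∈ posPolar (M.cone t ω) ∧ S t ω ≠ 0

/-- A `χ`-approximate martingale pair `(ℙ,S)`. -/
def ApproxPair (M : Market Ω d T) (χ : ℕ → Ω → ℝ) (p : Ω → ℝ)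
    (S : ℕ → Ω → Fin d → ℝ) : Prop :=
  (∀ ω, 0 ≤ p ω) ∧ (∑ ω, p ω = 1) ∧
  (∀ t, t ≤ T → Measurable[M.F t] (S t)) ∧
  (∀ t ω, t ≤ T → S t ω ∈ posPolar (M.cone t ω) ∧ S t ω ≠ 0) ∧
  ∀ t ω, t ≤ T →
    (∑ ω', (atomOf (M.F t) ω).indicator
      (fun ω'' => p ω'' • ∑ s ∈ Finset.Icc (t + 1) T, χ s ω'' • S s ω'') ω')
      ∈ posPolar (M.cone t ω)

/-- A `χ`-approximate martingale pair with `S^i ≡ 1`: membership of `P̄^i(χ)`. -/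
def ApproxPairI (M : Market Ω d T) (χ : ℕ → Ω → ℝ) (i : Fin d) (p : Ω → ℝ)
    (S : ℕ → Ω → Fin d → ℝ) : Prop :=
  ApproxPair M χ p S ∧ ∀ t ω, t ≤ T → S t ω i = 1

/-- A `χ`-approximate equivalent martingale pair with `S^i ≡ 1`: membership of `P^i(χ)`. -/
def EquivApproxPairI (M : Market Ω d T) (χ : ℕ → Ω → ℝ) (i : Fin d) (p : Ω → ℝ)
    (S : ℕ → Ω → Fin d → ℝ) : Prop :=
  ApproxPairI M χ i p S ∧ ∀ ω, 0 < p ω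

/-- A game option `(Y,X,X')`. -/
def IsGameOption (M : Market Ω d T) (Y X X' : ℕ → Ω → Fin d → ℝ) : Prop :=
  (∀ t, t ≤ T → Measurable[M.F t] (Y t)) ∧ (∀ t, t ≤ T → Measurable[M.F t] (X t)) ∧
  (∀ t, t ≤ T → Measurable[M.F t] (X' t)) ∧
  ∀ t ω, t ≤ T → X t ω - X' t ω ∈ M.cone t ω ∧ X' t ω - Y t ω ∈ M.cone t ω

/-- `(σ,y)` hedges the game option `(Y,X,X')` for the seller:
`y_{σ∧τ} − Q_{στ} ∈ K_{σ∧τ}` for all stopping times `τ`. -/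
def HedgesSeller (M : Market Ω d T) (Y X X' : ℕ → Ω → Fin d → ℝ) (σ : Ω → ℕ)
    (y : ℕ → Ω → Fin d → ℝ) : Prop :=
  ∀ τ, IsStoppingTime M.F T τ → ∀ ω,
    y (min (σ ω) (τ ω)) ω - payoffQ Y X X' (σ ω) (τ ω) ω ∈ M.cone (min (σ ω) (τ ω)) ω

/-- `(τ,y)` hedges the game option `(Y,X,X')` for the buyer:
`y_{σ∧τ} + Q_{στ} ∈ K_{σ∧τ}` for all stopping times `σ`. -/
def HedgesBuyer (M : Market Ω d T) (Y X X' : ℕ → Ω → Fin d → ℝ) (τ : Ω → ℕ)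
    (y : ℕ → Ω → Fin d → ℝ) : Prop :=
  ∀ σ, IsStoppingTime M.F T σ → ∀ ω,
    y (min (σ ω) (τ ω)) ω + payoffQ Y X X' (σ ω) (τ ω) ω ∈ M.cone (min (σ ω) (τ ω)) ω

/-- The seller's sets `Z^a_t` (pointwise at each `ω`), by backward induction:
`Z^a_T = X'_T + K_T` and
`Z^a_t = ((Z^a_{t+1} ∩ L_t) + K_t) ∩ (Y_t + K_t) ∪ (X_t + K_t)` for `t < T`. -/
def Za (M : Market Ω d T) (Y X X' : ℕ → Ω → Fin d → ℝ) (t : ℕ) (ω : Ω) :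
    Set (Fin d → ℝ) :=
  if T ≤ t then {v | v - X' T ω ∈ M.cone T ω}
  else (({v : Fin d → ℝ | ∀ ω' ∈ atomOf (M.F t) ω, v ∈ Za M Y X X' (t + 1) ω'}
          + M.cone t ω)
        ∩ {v | v - Y t ω ∈ M.cone t ω})
      ∪ {v | v - X t ω ∈ M.cone t ω}
termination_by T - t
decreasing_by omega

/-- The seller's set `Y^a_t = Y_t + K_t` (pointwise). -/
def YaSet (M : Market Ω d T) (Y : ℕ → Ω → Fin d → ℝ) (t : ℕ) (ω : Ω) :
    Set (Fin d → ℝ) :=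
  {v | v - Y t ω ∈ M.cone t ω}

/-- The seller's set `X^a_t` (pointwise): `X_t + K_t` for `t < T`, `X'_T + K_T` at `T`. -/
def XaSet (M : Market Ω d T) (X X' : ℕ → Ω → Fin d → ℝ) (t : ℕ) (ω : Ω) :
    Set (Fin d → ℝ) :=
  if T ≤ t then {v | v - X' T ω ∈ M.cone T ω} else {v | v - X t ω ∈ M.cone t ω}

/-- The seller's set `W^a_t = Z^a_{t+1} ∩ L_t` (pointwise: intersection over the atom). -/
def WaSet (M : Market Ω d T) (Y X X' : ℕ → Ω → Fin d → ℝ) (t : ℕ) (ω : Ω) :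
    Set (Fin d → ℝ) :=
  if T ≤ t then Set.univ
  else {v | ∀ ω' ∈ atomOf (M.F t) ω, v ∈ Za M Y X X' (t + 1) ω'}

/-- The seller's set `V^a_t = W^a_t + K_t` (pointwise). -/
def VaSet (M : Market Ω d T) (Y X X' : ℕ → Ω → Fin d → ℝ) (t : ℕ) (ω : Ω) :
    Set (Fin d → ℝ) :=
  if T ≤ t then Set.univ else WaSet M Y X X' t ω + M.cone t ω

/-- The ask (seller's) price of the game option in currency `i`. -/
def askPrice (M : Market Ω d T) (Y X X' : ℕ → Ω → Fin d → ℝ) (i : Fin d) : ℝ :=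
  sInf {z : ℝ | ∃ σ y, IsStoppingTime M.F T σ ∧ M.SelfFinancing y ∧
    HedgesSeller M Y X X' σ y ∧ y 0 = fun _ => z • eVec i}

/-- The bid (buyer's) price of the game option in currency `i`. -/
def bidPrice (M : Market Ω d T) (Y X X' : ℕ → Ω → Fin d → ℝ) (i : Fin d) : ℝ :=
  sSup {w : ℝ | ∃ z : ℝ, ∃ τ y, IsStoppingTime M.F T τ ∧ M.SelfFinancing y ∧
    HedgesBuyer M Y X X' τ y ∧ y 0 = (fun _ => z • eVec i) ∧ w = -z}

namespace AuxGO

variable {d : ℕ} {π : Fin d → Fin d → ℝ}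

lemma cone_zero : (0 : Fin d → ℝ) ∈ solvencyCone π :=
  ⟨0, 0, fun _ => le_rfl, fun _ _ => le_rfl, by simp⟩

lemma cone_add {x y : Fin d → ℝ} (hx : x ∈ solvencyCone π) (hy : y ∈ solvencyCone π) :
    x + y ∈ solvencyCone π := by
  obtain ⟨a1, b1, ha1, hb1, e1⟩ := hx
  obtain ⟨a2, b2, ha2, hb2, e2⟩ := hy
  refine ⟨a1 + a2, b1 + b2, fun i => add_nonneg (ha1 i) (ha2 i),
    fun i j => add_nonneg (hb1 i j) (hb2 i j), ?_⟩
  subst e1 e2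
  simp only [Pi.add_apply, add_smul, Finset.sum_add_distrib]
  abel

lemma cone_smul {x : Fin d → ℝ} {c : ℝ} (hc : 0 ≤ c) (hx : x ∈ solvencyCone π) :
    c • x ∈ solvencyCone π := by
  obtain ⟨a, b, ha, hb, e⟩ := hx
  refine ⟨fun i => c * a i, fun i j => c * b i j, fun i => mul_nonneg hc (ha i),
    fun i j => mul_nonneg hc (hb i j), ?_⟩
  subst e
  simp only [smul_add, Finset.smul_sum, smul_smul]

lemma cone_e (j : Fin d) : eVec j ∈ solvencyCone π := by
  refine ⟨fun m => if m = j then 1 else 0, 0, fun m => by positivity, fun _ _ => le_rfl, ?_⟩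
  simp [Finset.sum_ite_eq', eVec]

lemma cone_gen (i j : Fin d) : π i j • eVec i - eVec j ∈ solvencyCone π := by
  refine ⟨0, fun k l => if k = i ∧ l = j then 1 else 0, fun _ => le_rfl,
    fun k l => by positivity, ?_⟩
  have : ∀ k : Fin d, ∑ l, (if k = i ∧ l = j then (1:ℝ) else 0) • (π k l • eVec k - eVec l)
      = if k = i then π i j • eVec i - eVec j else 0 := by
    intro k
    by_cases hk : k = i
    · subst hk
      simp [Finset.sum_ite_eq']
    · simp [hk]
  rw [show (∑ k, ∑ l, (if k = i ∧ l = j then (1:ℝ) else 0) • (π k l • eVec k - eVec l))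
      = ∑ k, (if k = i then π i j • eVec i - eVec j else 0) from Finset.sum_congr rfl
        fun k _ => this k]
  simp

lemma cone_sum {s : Finset (Fin d)} {f : Fin d → (Fin d → ℝ)}
    (h : ∀ m ∈ s, f m ∈ solvencyCone π) : ∑ m ∈ s, f m ∈ solvencyCone π := by
  classical
  induction s using Finset.induction_on with
  | empty => simpa using cone_zero
  | @insert a s hnot ih =>
    rw [Finset.sum_insert hnot]
    exact cone_add (h _ (Finset.mem_insert_self _ _))
      (ih fun m hm => h m (Finset.mem_insert_of_mem hm))

/-- dot product API -/
lemma dotp_eVec (x : Fin d → ℝ) (j : Fin d) : dotp x (eVec j) = x j := by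
  simp [dotp, eVec, Pi.single_apply, mul_ite, Finset.sum_ite_eq']

lemma dotp_smul (x : Fin d → ℝ) (c : ℝ) (y : Fin d → ℝ) : dotp x (c • y) = c * dotp x y := by
  simp only [dotp, Pi.smul_apply, smul_eq_mul, Finset.mul_sum]
  exact Finset.sum_congr rfl fun m _ => by ring

lemma dotp_sub (x y z : Fin d → ℝ) : dotp x (y - z) = dotp x y - dotp x z := by
  simp [dotp, mul_sub, Finset.sum_sub_distrib]

lemma dotp_add (x y z : Fin d → ℝ) : dotp x (y + z) = dotp x y + dotp x z := by
  simp [dotp, mul_add, Finset.sum_add_distrib]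

lemma dotp_sum (x : Fin d → ℝ) (s : Finset (Fin d)) (f : Fin d → (Fin d → ℝ)) :
    dotp x (∑ m ∈ s, f m) = ∑ m ∈ s, dotp x (f m) := by
  simp only [dotp, Finset.sum_apply, Finset.mul_sum]
  exact Finset.sum_comm

/-- If `S` is nonnegative and `S j ≤ π i j * S i` for all `i j`, then `S` is in the
positive polar of the solvency cone. -/
lemma dotp_nonneg_of_cone {S : Fin d → ℝ} (hS0 : ∀ j, 0 ≤ S j)
    (hSle : ∀ i j, S j ≤ π i j * S i) {v : Fin d → ℝ} (hv : v ∈ solvencyCone π) :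
    0 ≤ dotp S v := by
  obtain ⟨a, b, ha, hb, e⟩ := hv
  subst e
  rw [dotp_add, dotp_sum, dotp_sum]
  have h1 : ∀ m ∈ Finset.univ, (0:ℝ) ≤ dotp S (a m • eVec m) := by
    intro m _
    rw [dotp_smul, dotp_eVec]
    exact mul_nonneg (ha m) (hS0 m)
  have h2 : ∀ k ∈ Finset.univ, (0:ℝ) ≤ dotp S (∑ j, b k j • (π k j • eVec k - eVec j)) := by
    intro k _
    rw [dotp_sum]
    refine Finset.sum_nonneg fun j _ => ?_
    rw [dotp_smul, dotp_sub, dotp_smul, dotp_eVec, dotp_eVec]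
    have := hSle k j
    have := hb k j
    nlinarith
  exact add_nonneg (Finset.sum_nonneg h1) (Finset.sum_nonneg h2)

end AuxGO

namespace AuxGO
variable {d : ℕ} {π : Fin d → Fin d → ℝ}


/-- product of exchange rates along a path -/
def cp (π : Fin d → Fin d → ℝ) : List (Fin d) → ℝ
  | [] => 1
  | [_] => 1
  | a :: b :: l => π a b * cp π (b :: l)

lemma cp_pos (hπ : ∀ i j, 0 < π i j) : ∀ l : List (Fin d), 0 < cp π l
  | [] => one_pos
  | [_] => one_pos
  | a :: b :: l => mul_pos (hπ a b) (cp_pos hπ (b :: l))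

lemma cp_split (y : Fin d) (ys : List (Fin d)) :
    ∀ xs : List (Fin d), cp π (xs ++ y :: ys) = cp π (xs ++ [y]) * cp π (y :: ys)
  | [] => by simp [cp]
  | [x] => by simp [cp]
  | x :: b :: xs => by
    have ih := cp_split y ys (b :: xs)
    simp only [List.cons_append, cp] at ih ⊢
    rw [ih]; ring

lemma path_mem_cone (hπ : ∀ i j, 0 < π i j) :
    ∀ (l : List (Fin d)) (a b : Fin d),
      cp π (a :: l ++ [b]) • eVec a - eVec b ∈ solvencyCone π
  | [], a, b => by
    have : cp π (a :: [] ++ [b]) = π a b := by simp [cp]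
    rw [this]; exact cone_gen a b
  | c :: l, a, b => by
    have ih := path_mem_cone hπ l c b
    have hP : 0 < cp π (c :: l ++ [b]) := cp_pos hπ _
    have hgen := cone_smul (le_of_lt hP) (cone_gen (π := π) a c)
    have := cone_add hgen ih
    have heq : cp π (c :: l ++ [b]) • (π a c • eVec a - eVec c)
        + (cp π (c :: l ++ [b]) • eVec c - eVec b)
        = cp π (a :: (c :: l) ++ [b]) • eVec a - eVec b := by
      have : cp π (a :: (c :: l) ++ [b]) = π a c * cp π (c :: l ++ [b]) := by
        simp [cp]
      rw [this, smul_sub, smul_smul]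
      module
    rwa [heq] at this

lemma exists_dup_split {α : Type*} :
    ∀ l : List α, ¬ l.Nodup → ∃ (a : α) (s t u : List α), l = s ++ a :: (t ++ a :: u)
  | [], h => absurd List.nodup_nil h
  | b :: l, h => by
    rw [List.nodup_cons] at h
    push_neg at h
    by_cases hb : b ∈ l
    · obtain ⟨s, t, rfl⟩ := List.append_of_mem hb
      exact ⟨b, [], s, t, rfl⟩
    · obtain ⟨a, s, t, u, rfl⟩ := exists_dup_split l (h hb)
      exact ⟨a, b :: s, t, u, rfl⟩

variable (π) in
/-- minimal path product from `i₀` to `j` over paths with at most `d+1` intermediate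
vertices -/
def Sval (i₀ j : Fin d) : ℝ :=
  haveI : Nonempty (Fin d) := ⟨i₀⟩
  Finset.inf' (Finset.range (d + 2)) ⟨0, by simp⟩ fun n =>
    Finset.inf' (Finset.univ : Finset (Fin n → Fin d)) Finset.univ_nonempty fun v =>
      cp π (i₀ :: (List.ofFn v ++ [j]))

lemma Sval_le (i₀ j : Fin d) {n : ℕ} (hn : n < d + 2) (v : Fin n → Fin d) :
    Sval π i₀ j ≤ cp π (i₀ :: (List.ofFn v ++ [j])) := by
  haveI : Nonempty (Fin d) := ⟨i₀⟩
  exact le_trans (Finset.inf'_le _ (Finset.mem_range.2 hn))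
    (Finset.inf'_le _ (Finset.mem_univ v))

lemma Sval_pos (hπ : ∀ i j, 0 < π i j) (i₀ j : Fin d) : 0 < Sval π i₀ j := by
  haveI : Nonempty (Fin d) := ⟨i₀⟩
  exact (Finset.lt_inf'_iff _).2 fun n _ => (Finset.lt_inf'_iff _).2 fun v _ => cp_pos hπ _

lemma Sval_exists (i₀ a : Fin d) :
    ∃ (n : ℕ) (v : Fin n → Fin d), Sval π i₀ a = cp π (i₀ :: (List.ofFn v ++ [a])) := by
  haveI : Nonempty (Fin d) := ⟨i₀⟩
  obtain ⟨n, _, hn⟩ := Finset.exists_mem_eq_inf' (s := Finset.range (d+2)) ⟨0, by simp⟩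
    (fun n => Finset.inf' (Finset.univ : Finset (Fin n → Fin d)) Finset.univ_nonempty
      fun v => cp π (i₀ :: (List.ofFn v ++ [a])))
  obtain ⟨v, _, hv⟩ := Finset.exists_mem_eq_inf'
    (s := (Finset.univ : Finset (Fin n → Fin d))) Finset.univ_nonempty
    (fun v => cp π (i₀ :: (List.ofFn v ++ [a])))
  exact ⟨n, v, by rw [Sval, hn, hv]⟩

end AuxGO

namespace AuxGO
variable {d : ℕ} {π : Fin d → Fin d → ℝ}

lemma head?_append_cons {α : Type*} (xs : List α) (b : α) (u v : List α) :
    (xs ++ b :: u).head? = (xs ++ b :: v).head? := by cases xs <;> simp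

lemma Sval_le_small (i₀ j : Fin d) (l : List (Fin d)) (hl : l.length ≤ d + 1) :
    Sval π i₀ j ≤ cp π (i₀ :: (l ++ [j])) := by
  have := Sval_le (π := π) i₀ j (n := l.length) (by omega) l.get
  rwa [List.ofFn_get] at this

lemma Sval_le_cp (hπ : ∀ i j, 0 < π i j) (hone : ∀ i, π i i = 1)
    (hcyc : ∀ (a : Fin d) (l : List (Fin d)), 1 ≤ cp π (a :: (l ++ [a])))
    (i₀ : Fin d) :
    ∀ (N : ℕ) (l : List (Fin d)) (j : Fin d), l.length ≤ N →
      Sval π i₀ j ≤ cp π (i₀ :: (l ++ [j])) := by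
  intro N
  induction N with
  | zero =>
    intro l j hl
    exact Sval_le_small i₀ j l (by omega)
  | succ N ih =>
    intro l j hl
    by_cases hsmall : l.length ≤ d + 1
    · exact Sval_le_small i₀ j l hsmall
    push_neg at hsmall
    set full := i₀ :: (l ++ [j]) with hfull
    have hndp : ¬ full.Nodup := by
      intro h
      have hle := h.length_le_card
      simp only [Fintype.card_fin, hfull, List.length_cons, List.length_append,
        List.length_singleton] at hle
      omega
    obtain ⟨a, xs, ys, zs, hsplit⟩ := exists_dup_split full hndp
    have h1 : cp π full = cp π (xs ++ [a]) * cp π (a :: (ys ++ a :: zs)) := by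
      rw [hsplit]; exact cp_split a (ys ++ a :: zs) xs
    have h2 : cp π (a :: (ys ++ a :: zs)) = cp π ((a :: ys) ++ [a]) * cp π (a :: zs) := by
      have := cp_split (π := π) a zs (a :: ys)
      simpa using this
    have hcyc1 : (1:ℝ) ≤ cp π ((a :: ys) ++ [a]) := by
      have := hcyc a ys
      simpa using this
    set sc := xs ++ a :: zs with hsc_def
    have hsc : cp π sc = cp π (xs ++ [a]) * cp π (a :: zs) := cp_split a zs xs
    have hscpos : 0 < cp π sc := cp_pos hπ _
    have hfull_ge : cp π sc ≤ cp π full := by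
      rw [h1, h2, hsc]
      nlinarith [cp_pos hπ (xs ++ [a]), cp_pos hπ (a :: zs)]
    have hhead : sc.head? = some i₀ := by
      have : full.head? = some i₀ := rfl
      rw [hsplit] at this
      rw [hsc_def, head?_append_cons xs a zs (ys ++ a :: zs)]
      exact this
    have hlast : sc.getLast? = some j := by
      have h3 : full.getLast? = some j := by
        rw [hfull, show i₀ :: (l ++ [j]) = (i₀ :: l) ++ [j] by simp,
          List.getLast?_append_cons]
        rfl
      rw [hsplit, List.getLast?_append_cons,
        show a :: (ys ++ a :: zs) = (a :: ys) ++ a :: zs by simp,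
        List.getLast?_append_cons] at h3
      rw [hsc_def, List.getLast?_append_cons]
      exact h3
    have hlen : sc.length ≤ l.length + 1 := by
      have := congrArg List.length hsplit
      simp only [hfull, List.length_cons, List.length_append, List.length_singleton, List.length_nil] at this
      simp only [hsc_def, List.length_append, List.length_cons]
      omega
    rcases sc with _ | ⟨c, cs⟩
    · simp at hhead
    have hc : c = i₀ := by simpa using hhead
    rcases cs with _ | ⟨c', cs'⟩
    · -- sc = [c], so j = c = i₀ and cp sc = 1
      have hj : j = c := by
        simp only [List.getLast?_singleton, Option.some_inj] at hlast
        exact hlast.symm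
      have hS1 : Sval π i₀ j ≤ 1 := by
        have h4 := Sval_le_small (π := π) i₀ i₀ [] (by simp)
        simp only [List.nil_append] at h4
        calc Sval π i₀ j = Sval π i₀ i₀ := by rw [hj, hc]
        _ ≤ cp π (i₀ :: [i₀]) := h4
        _ = 1 := by simp [cp, hone]
      have hsc1 : cp π [c] = 1 := rfl
      calc Sval π i₀ j ≤ 1 := hS1
      _ = cp π [c] := hsc1.symm
      _ ≤ cp π full := hfull_ge
    · -- sc = c :: c' :: cs', length ≥ 2
      have hne : (c' :: cs') ≠ [] := List.cons_ne_nil _ _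
      have hlast2 : (c' :: cs').getLast hne = j := by
        rw [List.getLast?_cons_cons, List.getLast?_eq_getLast hne,
          Option.some_inj] at hlast
        exact hlast
      have hrepr : c :: c' :: cs' = i₀ :: ((c' :: cs').dropLast ++ [j]) := by
        rw [hc, ← hlast2, List.dropLast_append_getLast hne]
      have hlenmid : ((c' :: cs').dropLast).length ≤ N := by
        have h5 : (c :: c' :: cs').length ≤ l.length + 1 := hlen
        have h6 : ((c' :: cs').dropLast).length = (c' :: cs').length - 1 :=
          List.length_dropLast
        simp only [List.length_cons, List.length_nil] at h5 h6 ⊢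
        omega
      have := ih ((c' :: cs').dropLast) j hlenmid
      rw [← hrepr] at this
      exact le_trans this hfull_ge

/-- monotone step: `Sval b ≤ π a b * Sval a`. -/
lemma Sval_mul (hπ : ∀ i j, 0 < π i j) (hone : ∀ i, π i i = 1)
    (hcyc : ∀ (a : Fin d) (l : List (Fin d)), 1 ≤ cp π (a :: (l ++ [a])))
    (i₀ a b : Fin d) : Sval π i₀ b ≤ π a b * Sval π i₀ a := by
  obtain ⟨n, v, hv⟩ := Sval_exists (π := π) i₀ a
  have h1 : Sval π i₀ b ≤ cp π (i₀ :: ((List.ofFn v ++ [a]) ++ [b])) :=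
    Sval_le_cp hπ hone hcyc i₀ _ _ b le_rfl
  have h2 : cp π (i₀ :: ((List.ofFn v ++ [a]) ++ [b]))
      = cp π (i₀ :: (List.ofFn v ++ [a])) * π a b := by
    have h3 := cp_split (π := π) a [b] (i₀ :: List.ofFn v)
    have h4 : (i₀ :: List.ofFn v) ++ a :: [b] = i₀ :: ((List.ofFn v ++ [a]) ++ [b]) := by
      simp
    have h5 : (i₀ :: List.ofFn v) ++ [a] = i₀ :: (List.ofFn v ++ [a]) := by simp
    rw [h4, h5] at h3
    rw [h3, show cp π (a :: [b]) = π a b by simp [cp]]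
  rw [h2, ← hv] at h1
  linarith

end AuxGO



namespace AuxGO

variable {d T : ℕ}

/-- decomposition lemma: for `z` large, `z • e^i - c` is solvent. -/
lemma smul_sub_mem_cone {π : Fin d → Fin d → ℝ} (i : Fin d) (c : Fin d → ℝ) (z : ℝ)
    (hz : c i - max (c i) 0 + ∑ j, max (c j) 0 * π i j ≤ z) :
    z • eVec i - c ∈ solvencyCone π := by
  classical
  set A : Fin d → ℝ := fun m =>
    if m = i then z - c i + max (c i) 0 - ∑ j, max (c j) 0 * π i j
    else max (c m) 0 - c m with hA
  have key : z • eVec i - c =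
      (∑ j, (max (c j) 0) • (π i j • eVec i - eVec j)) + ∑ m, A m • eVec m := by
    funext p
    simp only [Pi.sub_apply, Pi.add_apply, Pi.smul_apply, Finset.sum_apply, smul_eq_mul,
      eVec, Pi.single_apply, mul_ite, mul_one, mul_zero, mul_sub,
      Finset.sum_sub_distrib, Finset.sum_ite_eq, Finset.sum_ite_eq', Finset.mem_univ,
      if_true, Finset.sum_const_zero, hA]
    by_cases hp : p = i
    · subst hp
      simp only [if_true]
      ring
    · simp only [if_neg hp, Finset.sum_const_zero, add_zero]
      ring
  rw [key]
  refine cone_add (cone_sum fun j _ => cone_smul (le_max_right _ _) (cone_gen i j))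
    (cone_sum fun m _ => cone_smul ?_ (cone_e m))
  by_cases hm : m = i
  · subst hm; simp only [hA, if_pos rfl]; linarith
  · simp only [hA, if_neg hm]
    rcases le_or_gt (c m) 0 with h | h
    · rw [max_eq_right h]; linarith
    · rw [max_eq_left h.le]; linarith

variable {Ω : Type*}

lemma isST_const (F : ℕ → MeasurableSpace Ω) (T : ℕ) (s : ℕ) (hs : s ≤ T) :
    IsStoppingTime F T (fun _ => s) := by
  refine ⟨fun _ => hs, fun t => ?_⟩
  by_cases h : s ≤ t
  · simp only [h, Set.setOf_true]; exact @MeasurableSet.univ Ω (F t)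
  · simp only [h, Set.setOf_false]; exact @MeasurableSet.empty Ω (F t)

lemma isST_min {F : ℕ → MeasurableSpace Ω} {T : ℕ} {σ τ : Ω → ℕ}
    (hσ : IsStoppingTime F T σ) (hτ : IsStoppingTime F T τ) :
    IsStoppingTime F T (fun ω => min (σ ω) (τ ω)) := by
  refine ⟨fun ω => le_trans (min_le_left _ _) (hσ.1 ω), fun t => ?_⟩
  have : {ω | min (σ ω) (τ ω) ≤ t} = {ω | σ ω ≤ t} ∪ {ω | τ ω ≤ t} := by
    ext ω; simp [min_le_iff]
  rw [this]
  exact (hσ.2 t).union (hτ.2 t)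

lemma isST_succ_min {F : ℕ → MeasurableSpace Ω} {T : ℕ} {τ : Ω → ℕ}
    (hF : ∀ s t : ℕ, s ≤ t → F s ≤ F t) (hτ : IsStoppingTime F T τ) :
    IsStoppingTime F T (fun ω => min (τ ω + 1) T) := by
  refine ⟨fun ω => min_le_right _ _, fun t => ?_⟩
  by_cases hT : T ≤ t
  · have : {ω | min (τ ω + 1) T ≤ t} = Set.univ := by
      ext ω; simp only [Set.mem_setOf_eq, Set.mem_univ, iff_true]
      exact le_trans (min_le_right _ _) hT
    rw [this]; exact @MeasurableSet.univ Ω (F t)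
  · have h1 : {ω | min (τ ω + 1) T ≤ t} = {ω | τ ω + 1 ≤ t} := by
      ext ω; simp only [Set.mem_setOf_eq, min_le_iff]
      exact ⟨fun h => h.resolve_right hT, Or.inl⟩
    rw [h1]
    cases t with
    | zero =>
      have : {ω | τ ω + 1 ≤ 0} = (∅ : Set Ω) := by ext ω; simp
      rw [this]; exact @MeasurableSet.empty Ω (F 0)
    | succ s =>
      have : {ω | τ ω + 1 ≤ s + 1} = {ω | τ ω ≤ s} := by ext ω; simp [Nat.succ_le_succ_iff]
      rw [this]
      exact hF s (s+1) (Nat.le_succ s) _ (hτ.2 s)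

variable [Fintype Ω]

lemma pi0_const (M : Market Ω d T) (a b : Fin d) (ω ω' : Ω) :
    M.pi 0 a b ω = M.pi 0 a b ω' := by
  have hm := M.pi_meas 0 (Nat.zero_le T) a b
  rw [M.F_zero] at hm
  have hms : MeasurableSet[⊥] (M.pi 0 a b ⁻¹' {M.pi 0 a b ω'}) :=
    hm (measurableSet_singleton _)
  rw [MeasurableSpace.measurableSet_bot_iff] at hms
  rcases hms with h | h
  · have hmem : ω' ∈ M.pi 0 a b ⁻¹' {M.pi 0 a b ω'} := rfl
    rw [h] at hmem
    exact absurd hmem (Set.notMem_empty ω')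
  · have hmem : ω ∈ M.pi 0 a b ⁻¹' {M.pi 0 a b ω'} := h ▸ Set.mem_univ ω
    exact hmem

lemma cone0_const (M : Market Ω d T) (ω ω' : Ω) : M.cone 0 ω = M.cone 0 ω' := by
  have h : (fun a b => M.pi 0 a b ω) = (fun a b => M.pi 0 a b ω') := by
    funext a b; exact pi0_const M a b ω ω'
  show solvencyCone _ = solvencyCone _
  rw [h]

lemma market_nonempty (M : Market Ω d T) : Nonempty Ω := by
  by_contra h
  rw [not_nonempty_iff] at h
  have := M.P_sum
  rw [Finset.sum_of_isEmpty] at this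
  exact zero_ne_one this

/-- No arbitrage forbids a free lunch `-(ε • e^u)` in the time-0 cone. -/
lemma na_no_free (M : Market Ω d T) (hNA : M.NoArbitrage) (u : Fin d) (ε : ℝ) (hε : 0 < ε)
    (hmem : ∀ ω, -(ε • eVec u) ∈ M.cone 0 ω) : False := by
  obtain ⟨ωb⟩ := market_nonempty M
  apply hNA
  refine ⟨fun t _ => if t = 0 then 0 else ε • eVec u, ⟨?_, ?_, ?_⟩, ?_,
    fun _ => ε • eVec u, ?_, ?_, ?_⟩
  · exact measurable_const
  · intro t _; exact measurable_const
  · intro t ht ω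
    by_cases h0 : t = 0
    · subst h0
      simp only [if_pos rfl, if_true, Nat.one_ne_zero, if_neg (by omega : ¬ (0+1 = 0)), zero_sub]
      exact hmem ω
    · simp only [if_neg h0, if_neg (by omega : ¬ (t+1 = 0)), sub_self]
      exact cone_zero
  · intro ω; simp
  · intro ω m
    simp only [Pi.smul_apply, eVec, Pi.single_apply, smul_eq_mul]
    by_cases hm : m = u <;> simp [hm, hε.le]
  · intro h
    have := congrFun (congrFun h ωb) u
    simp only [Pi.smul_apply, eVec, Pi.single_apply, if_pos rfl, if_true, smul_eq_mul, mul_one,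
      Pi.zero_apply] at this
    exact hε.ne' this
  · intro ω
    by_cases hT : T = 0
    · subst hT
      simp only [if_pos rfl, if_true, zero_sub]
      exact hmem ω
    · simp only [if_neg hT, sub_self]
      exact cone_zero

/-- Under no arbitrage, every exchange cycle at time 0 has product at least 1. -/
lemma na_cycle (M : Market Ω d T) (hNA : M.NoArbitrage) (ωb : Ω) (a : Fin d)
    (l : List (Fin d)) : 1 ≤ cp (fun i j => M.pi 0 i j ωb) (a :: (l ++ [a])) := by
  set π₀ : Fin d → Fin d → ℝ := fun i j => M.pi 0 i j ωb with hπ₀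
  by_contra hlt
  push_neg at hlt
  have hπpos : ∀ i j, 0 < π₀ i j := fun i j => M.pi_pos 0 (Nat.zero_le T) i j ωb
  have hmem := path_mem_cone hπpos l a a
  have hpos := cp_pos hπpos (a :: l ++ [a])
  rw [List.cons_append] at hmem hpos
  have heq : cp π₀ (a :: (l ++ [a])) • eVec a - eVec a
      = -((1 - cp π₀ (a :: (l ++ [a]))) • eVec a) := by
    rw [← neg_smul, neg_sub, sub_smul, one_smul]
  rw [heq] at hmem
  refine na_no_free M hNA a (1 - cp π₀ (a :: (l ++ [a]))) (by linarith) fun ω => ?_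
  rw [cone0_const M ω ωb]
  exact hmem

/-- Part 1: hedging characterisation for a fixed cancellation time. -/
lemma part1 (M : Market Ω d T) (Y X X' : ℕ → Ω → Fin d → ℝ)
    (hGO : IsGameOption M Y X X') (σ : Ω → ℕ) (y : ℕ → Ω → Fin d → ℝ)
    (hσ : IsStoppingTime M.F T σ) :
    HedgesSeller M Y X X' σ y ↔
      ∀ τ, IsStoppingTime M.F T τ → (∀ ω, τ ω ≤ σ ω) → ∀ ω,
        y (τ ω) ω - payoffH T Y X X' (σ ω) (τ ω) ω ∈ M.cone (τ ω) ω := by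
  constructor
  · intro h τ hτ hle ω
    rcases lt_or_eq_of_le (hle ω) with hlt | heq
    · have h1 := h τ hτ ω
      rw [min_eq_right (hle ω)] at h1
      have hQ : payoffQ Y X X' (σ ω) (τ ω) ω = Y (τ ω) ω := by
        unfold payoffQ; rw [if_pos hlt]
      have hH : payoffH T Y X X' (σ ω) (τ ω) ω = Y (τ ω) ω := by
        unfold payoffH; rw [if_pos hlt]
      rw [hQ] at h1; rw [hH]; exact h1
    · rcases lt_or_eq_of_le (hσ.1 ω) with hT | hT
      · -- τ ω = σ ω < T : hedge against the stopping time min (τ + 1) T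
        have hρ : IsStoppingTime M.F T (fun ω' => min (τ ω' + 1) T) :=
          isST_succ_min M.F_mono hτ
        have h1 := h _ hρ ω
        have hρω : min (τ ω + 1) T = σ ω + 1 := by
          rw [heq]; exact min_eq_left (by omega)
        rw [hρω, min_eq_left (by omega : σ ω ≤ σ ω + 1)] at h1
        have hQ : payoffQ Y X X' (σ ω) (σ ω + 1) ω = X (σ ω) ω := by
          unfold payoffQ; rw [if_neg (by omega), if_pos (by omega)]
        have hH : payoffH T Y X X' (σ ω) (τ ω) ω = X (σ ω) ω := by
          unfold payoffH; rw [if_neg (by omega), if_pos (by omega : σ ω = τ ω ∧ σ ω < T)]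
        rw [hQ] at h1; rw [hH, heq]; exact h1
      · -- τ ω = σ ω = T
        have h1 := h τ hτ ω
        rw [min_eq_right (hle ω)] at h1
        have hQ : payoffQ Y X X' (σ ω) (τ ω) ω = X' (σ ω) ω := by
          unfold payoffQ; rw [if_neg (by omega), if_neg (by omega)]
        have hH : payoffH T Y X X' (σ ω) (τ ω) ω = X' (σ ω) ω := by
          unfold payoffH
          rw [if_neg (by omega), if_neg (by omega), if_pos (by omega : σ ω = τ ω ∧ σ ω = T)]
        rw [hQ] at h1; rw [hH]; exact h1
  · intro h τ hτ ω
    have hμ : IsStoppingTime M.F T (fun ω' => min (σ ω') (τ ω')) := isST_min hσ hτ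
    have h1 := h _ hμ (fun ω' => min_le_left _ _) ω
    rcases lt_trichotomy (τ ω) (σ ω) with hlt | heq | hgt
    · have hm : min (σ ω) (τ ω) = τ ω := min_eq_right (le_of_lt hlt)
      rw [hm] at h1 ⊢
      have hH : payoffH T Y X X' (σ ω) (τ ω) ω = Y (τ ω) ω := by
        unfold payoffH; rw [if_pos hlt]
      have hQ : payoffQ Y X X' (σ ω) (τ ω) ω = Y (τ ω) ω := by
        unfold payoffQ; rw [if_pos hlt]
      rw [hH] at h1; rw [hQ]; exact h1
    · have hm : min (σ ω) (τ ω) = σ ω := by omega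
      rw [hm] at h1 ⊢
      rcases lt_or_eq_of_le (hσ.1 ω) with hT | hT
      · have hH : payoffH T Y X X' (σ ω) (σ ω) ω = X (σ ω) ω := by
          unfold payoffH; rw [if_neg (by omega), if_pos (by omega : σ ω = σ ω ∧ σ ω < T)]
        rw [hH] at h1
        have hQ : payoffQ Y X X' (σ ω) (τ ω) ω = X' (σ ω) ω := by
          unfold payoffQ; rw [if_neg (by omega), if_neg (by omega)]
        rw [hQ]
        have hXX' : X (σ ω) ω - X' (σ ω) ω ∈ M.cone (σ ω) ω :=
          (hGO.2.2.2 (σ ω) ω (le_of_lt hT)).1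
        have h2 := cone_add h1 hXX'
        rwa [sub_add_sub_cancel] at h2
      · have hH : payoffH T Y X X' (σ ω) (σ ω) ω = X' (σ ω) ω := by
          unfold payoffH
          rw [if_neg (by omega), if_neg (by omega), if_pos (by omega : σ ω = σ ω ∧ σ ω = T)]
        rw [hH] at h1
        have hQ : payoffQ Y X X' (σ ω) (τ ω) ω = X' (σ ω) ω := by
          unfold payoffQ; rw [if_neg (by omega), if_neg (by omega)]
        rw [hQ]; exact h1
    · have hT : σ ω < T := lt_of_lt_of_le hgt (hτ.1 ω)
      have hm : min (σ ω) (τ ω) = σ ω := min_eq_left (le_of_lt hgt)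
      rw [hm] at h1 ⊢
      have hH : payoffH T Y X X' (σ ω) (σ ω) ω = X (σ ω) ω := by
        unfold payoffH; rw [if_neg (by omega), if_pos (by omega : σ ω = σ ω ∧ σ ω < T)]
      rw [hH] at h1
      have hQ : payoffQ Y X X' (σ ω) (τ ω) ω = X (σ ω) ω := by
        unfold payoffQ; rw [if_neg (by omega), if_pos hgt]
      rw [hQ]; exact h1

end AuxGO


/-- For a fixed cancellation time `σ`, the pair `(σ,y)` hedges the game option
`(Y,X,X')` for the seller if and only if `y_τ − H_{στ} ∈ K_τ` for every stopping time
`τ ≤ σ`; consequently the ask price decomposes as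
`π^a_i(Y,X,X') = min_{σ∈T} p^a_i(σ)` with
`p^a_i(σ) = inf{z : ∃ y ∈ Φ, y_0 = z e^i, y_τ − H_{στ} ∈ K_τ ∀ τ ∈ T, τ ≤ σ}`. -/
theorem askPrice_decomposition {Ω : Type*} [Fintype Ω] {d T : ℕ}
    (M : Market Ω d T) (hNA : M.NoArbitrage)
    (Y X X' : ℕ → Ω → Fin d → ℝ) (hGO : IsGameOption M Y X X') (i : Fin d) :
    (∀ σ y, IsStoppingTime M.F T σ → M.SelfFinancing y →
      (HedgesSeller M Y X X' σ y ↔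
        ∀ τ, IsStoppingTime M.F T τ → (∀ ω, τ ω ≤ σ ω) → ∀ ω,
          y (τ ω) ω - payoffH T Y X X' (σ ω) (τ ω) ω ∈ M.cone (τ ω) ω)) ∧
    IsLeast {v : ℝ | ∃ σ, IsStoppingTime M.F T σ ∧
        v = sInf {z : ℝ | ∃ y, M.SelfFinancing y ∧ (y 0 = fun _ => z • eVec i) ∧
          ∀ τ, IsStoppingTime M.F T τ → (∀ ω, τ ω ≤ σ ω) → ∀ ω,
            y (τ ω) ω - payoffH T Y X X' (σ ω) (τ ω) ω ∈ M.cone (τ ω) ω}}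
      (askPrice M Y X X' i) := by
  classical
  obtain ⟨ωb⟩ := AuxGO.market_nonempty M
  have hpart1 : ∀ σ y, IsStoppingTime M.F T σ → M.SelfFinancing y →
      (HedgesSeller M Y X X' σ y ↔
        ∀ τ, IsStoppingTime M.F T τ → (∀ ω, τ ω ≤ σ ω) → ∀ ω,
          y (τ ω) ω - payoffH T Y X X' (σ ω) (τ ω) ω ∈ M.cone (τ ω) ω) :=
    fun σ y hσ _ => AuxGO.part1 M Y X X' hGO σ y hσ
  refine ⟨hpart1, ?_⟩
  set A : Set ℝ := {z : ℝ | ∃ σ y, IsStoppingTime M.F T σ ∧ M.SelfFinancing y ∧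
    HedgesSeller M Y X X' σ y ∧ y 0 = fun _ => z • eVec i} with hA
  set Aσ : (Ω → ℕ) → Set ℝ := fun σ =>
    {z : ℝ | ∃ y, M.SelfFinancing y ∧ (y 0 = fun _ => z • eVec i) ∧
      ∀ τ, IsStoppingTime M.F T τ → (∀ ω, τ ω ≤ σ ω) → ∀ ω,
        y (τ ω) ω - payoffH T Y X X' (σ ω) (τ ω) ω ∈ M.cone (τ ω) ω} with hAσ
  have hask : askPrice M Y X X' i = sInf A := rfl
  -- Aσ σ ⊆ A for every stopping time σ
  have hsub : ∀ σ, IsStoppingTime M.F T σ → Aσ σ ⊆ A := by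
    intro σ hσ z hz
    obtain ⟨y, hSF, hy0, hcond⟩ := hz
    exact ⟨σ, y, hσ, hSF, (AuxGO.part1 M Y X X' hGO σ y hσ).2 hcond, hy0⟩
  -- a uniform large element of every Aσ
  set cand : Finset ℝ := (Finset.range (T+1) ×ˢ (Finset.univ : Finset Ω)).image
    (fun p => max (Y p.1 p.2 i - max (Y p.1 p.2 i) 0 + ∑ j, max (Y p.1 p.2 j) 0 * M.pi p.1 i j p.2)
      (max (X p.1 p.2 i - max (X p.1 p.2 i) 0 + ∑ j, max (X p.1 p.2 j) 0 * M.pi p.1 i j p.2)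
        (X' p.1 p.2 i - max (X' p.1 p.2 i) 0 + ∑ j, max (X' p.1 p.2 j) 0 * M.pi p.1 i j p.2)))
    with hcand
  have hcne : cand.Nonempty := Finset.image_nonempty.2 ⟨(0, ωb), by simp⟩
  set z₀ : ℝ := cand.max' hcne with hz₀def
  have hz₀ : ∀ t, t ≤ T → ∀ ω (c : Fin d → ℝ), (c = Y t ω ∨ c = X t ω ∨ c = X' t ω) →
      c i - max (c i) 0 + ∑ j, max (c j) 0 * M.pi t i j ω ≤ z₀ := by
    intro t ht ω c hc
    have hmem : max (Y t ω i - max (Y t ω i) 0 + ∑ j, max (Y t ω j) 0 * M.pi t i j ω)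
        (max (X t ω i - max (X t ω i) 0 + ∑ j, max (X t ω j) 0 * M.pi t i j ω)
          (X' t ω i - max (X' t ω i) 0 + ∑ j, max (X' t ω j) 0 * M.pi t i j ω)) ∈ cand :=
      Finset.mem_image_of_mem _
        (show ((t, ω) : ℕ × Ω) ∈ Finset.range (T+1) ×ˢ (Finset.univ : Finset Ω) from
          Finset.mem_product.2 ⟨Finset.mem_range.2 (by omega), Finset.mem_univ ω⟩)
    have hle := cand.le_max' _ hmem
    rcases hc with rfl | rfl | rfl
    · exact le_trans (le_max_left _ _) hle
    · exact le_trans (le_trans (le_max_left _ _) (le_max_right _ _)) hle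
    · exact le_trans (le_trans (le_max_right _ _) (le_max_right _ _)) hle
  have hbig : ∀ σ, IsStoppingTime M.F T σ → z₀ ∈ Aσ σ := by
    intro σ hσ
    refine ⟨fun _ _ => z₀ • eVec i, ⟨measurable_const, fun _ _ => measurable_const,
      fun t _ ω => by rw [sub_self]; exact AuxGO.cone_zero⟩, rfl, ?_⟩
    intro τ hτ hle ω
    have htle : τ ω ≤ T := hτ.1 ω
    rcases lt_or_eq_of_le (hle ω) with hlt | heq
    · have hH : payoffH T Y X X' (σ ω) (τ ω) ω = Y (τ ω) ω := by
        unfold payoffH; rw [if_pos hlt]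
      rw [hH]
      exact AuxGO.smul_sub_mem_cone i _ z₀ (hz₀ (τ ω) htle ω _ (Or.inl rfl))
    · rcases lt_or_eq_of_le (hσ.1 ω) with hT | hT
      · have hH : payoffH T Y X X' (σ ω) (τ ω) ω = X (τ ω) ω := by
          unfold payoffH
          rw [if_neg (by omega), if_pos (by omega : σ ω = τ ω ∧ σ ω < T), ← heq]
      
        rw [hH]
        exact AuxGO.smul_sub_mem_cone i _ z₀ (hz₀ (τ ω) htle ω _ (Or.inr (Or.inl rfl)))
      · have hH : payoffH T Y X X' (σ ω) (τ ω) ω = X' (τ ω) ω := by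
          unfold payoffH
          rw [if_neg (by omega), if_neg (by omega), if_pos (by omega : σ ω = τ ω ∧ σ ω = T),
            ← heq]
        rw [hH]
        exact AuxGO.smul_sub_mem_cone i _ z₀ (hz₀ (τ ω) htle ω _ (Or.inr (Or.inr rfl)))
  -- A is nonempty
  have hσ0 : IsStoppingTime M.F T (fun _ => 0) := AuxGO.isST_const M.F T 0 (Nat.zero_le T)
  have hAne : A.Nonempty := ⟨z₀, hsub _ hσ0 (hbig _ hσ0)⟩
  -- A is bounded below, via a positive consistent price vector at time 0
  have hπ0pos : ∀ a b, 0 < M.pi 0 a b ωb := fun a b => M.pi_pos 0 (Nat.zero_le T) a b ωb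
  have hone : ∀ a : Fin d, M.pi 0 a a ωb = 1 := fun a => M.pi_one 0 (Nat.zero_le T) a ωb
  have hcyc : ∀ (a : Fin d) (l : List (Fin d)),
      1 ≤ AuxGO.cp (fun a b => M.pi 0 a b ωb) (a :: (l ++ [a])) :=
    fun a l => AuxGO.na_cycle M hNA ωb a l
  set S : Fin d → ℝ := AuxGO.Sval (fun a b => M.pi 0 a b ωb) i with hSdef
  have hSpos : ∀ j, 0 < S j := fun j => AuxGO.Sval_pos hπ0pos i j
  have hSmul : ∀ a b, S b ≤ M.pi 0 a b ωb * S a :=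
    fun a b => AuxGO.Sval_mul hπ0pos hone hcyc i a b
  have hpolar : ∀ v ∈ M.cone 0 ωb, 0 ≤ dotp S v :=
    fun v hv => AuxGO.dotp_nonneg_of_cone (fun j => (hSpos j).le) hSmul hv
  set lb : ℝ := min (dotp S (Y 0 ωb)) (dotp S (X' 0 ωb)) / S i with hlbdef
  have hbdd : lb ∈ lowerBounds A := by
    intro z hz
    obtain ⟨σ, y, hσ, hSF, hH, hy0⟩ := hz
    have h1 := hH _ hσ0 ωb
    rw [min_eq_right (Nat.zero_le _)] at h1
    have hy0' : y 0 ωb = z • eVec i := by rw [hy0]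
    rw [hy0'] at h1
    have h2 := hpolar _ h1
    rw [AuxGO.dotp_sub, AuxGO.dotp_smul, AuxGO.dotp_eVec] at h2
    have hc : dotp S (payoffQ Y X X' (σ ωb) 0 ωb) = dotp S (Y 0 ωb) ∨
        dotp S (payoffQ Y X X' (σ ωb) 0 ωb) = dotp S (X' 0 ωb) := by
      unfold payoffQ
      by_cases h0 : 0 < σ ωb
      · rw [if_pos h0]; exact Or.inl rfl
      · rw [if_neg h0, if_neg (by omega)]
        have : σ ωb = 0 := by omega
        rw [this]
        exact Or.inr rfl
    rw [hlbdef, div_le_iff₀ (hSpos i)]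
    rcases hc with h | h
    · rw [h] at h2
      have hm := min_le_left (dotp S (Y 0 ωb)) (dotp S (X' 0 ωb))
      linarith
    · rw [h] at h2
      have hm := min_le_right (dotp S (Y 0 ωb)) (dotp S (X' 0 ωb))
      linarith
  have hAbdd : BddBelow A := ⟨lb, hbdd⟩
  -- minimise over the (finite) set of stopping times
  set STset : Set (Ω → ℕ) := {σ | IsStoppingTime M.F T σ} with hSTdef
  have hSTfin : STset.Finite := by
    refine Set.Finite.subset (Set.Finite.pi (fun _ : Ω => Set.finite_Iic T)) ?_
    intro σ hσ
    simp only [Set.mem_pi, Set.mem_univ, Set.mem_Iic, forall_true_left]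
    exact fun ω => hσ.1 ω
  have hSTne : STset.Nonempty := ⟨fun _ => 0, hσ0⟩
  obtain ⟨σs, hσs, hminσ⟩ := Set.exists_min_image STset (fun σ => sInf (Aσ σ)) hSTfin hSTne
  rw [hask]
  constructor
  · -- membership: sInf A is attained by the minimising stopping time σs
    refine ⟨σs, hσs, ?_⟩
    apply le_antisymm
    · exact csInf_le_csInf hAbdd ⟨z₀, hbig σs hσs⟩ (hsub σs hσs)
    · refine le_csInf hAne ?_
      intro z hz
      obtain ⟨σ', y, hσ', hSF, hHed, hy0⟩ := hz
      have hz' : z ∈ Aσ σ' := ⟨y, hSF, hy0, (AuxGO.part1 M Y X X' hGO σ' y hσ').1 hHed⟩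
      calc sInf (Aσ σs) ≤ sInf (Aσ σ') := hminσ σ' hσ'
      _ ≤ z := csInf_le (hAbdd.mono (hsub σ' hσ')) hz'
  · -- lower bound
    rintro v ⟨σ, hσ, rfl⟩
    exact csInf_le_csInf hAbdd ⟨z₀, hbig σ hσ⟩ (hsub σ hσ)
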